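/- Let g be a weight function on ℝ^{2n+1} = ℝ^{2n} × ℝ and m a weight for g, and suppose g(λ^{1/2}w, λ) ≥ λ^{1/2} for all w ∈ ℝ^{2n} and λ > 0. Then there exist constants C', M' > 0, independent of λ, such that for every λ > 0 the function g^{(λ)}(w) := λ^{-1/2} g(λ^{1/2}w, λ) is a weight function on ℝ^{2n} with constants C', M', and the function m_{(λ)}(w) := m(λ^{1/2}w, λ) is a weight for g^{(λ)} with constants C', M'. -/

import Mathlib

open MeasureTheory Complex Topology Filter
open scoped RealInnerProductSpace ENNReal

noncomputable section

/-- A weight function with explicit constants `C, M`. -/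
def IsWeightFnWith {X : Type*} [NormedAddCommGroup X] (C M : ℝ) (g : X → ℝ) : Prop :=
  Continuous g ∧ (∀ x, 1 ≤ g x) ∧ ∀ x y : X,
    g x / g y ≤ C * (1 + ‖x - y‖ / g x) ^ M ∧
    g y / g x ≤ C * (1 + ‖x - y‖ / g x) ^ M

/-- A weight for `g` with explicit constants `C, M`. -/
def IsWeightWith {X : Type*} [NormedAddCommGroup X] (C M : ℝ) (g m : X → ℝ) : Prop :=
  (∀ x, 0 < m x) ∧ ∀ x y : X,
    m x / m y ≤ C * (1 + ‖x - y‖ / g x) ^ M ∧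
    m y / m x ≤ C * (1 + ‖x - y‖ / g x) ^ M

/-- A weight function (with some constants). -/
def IsWeightFn {X : Type*} [NormedAddCommGroup X] (g : X → ℝ) : Prop :=
  ∃ C M : ℝ, 0 < C ∧ 0 < M ∧ IsWeightFnWith C M g

/-- A weight for `g` (with some constants). -/
def IsWeight {X : Type*} [NormedAddCommGroup X] (g m : X → ℝ) : Prop :=
  ∃ C M : ℝ, 0 < C ∧ 0 < M ∧ IsWeightWith C M g m

/-- If `g` is a weight function on `ℝ^{2n+1} = ℝ^{2n} × ℝ`, `m` a weight for `g`, and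
`g(λ^{1/2}w, λ) ≥ λ^{1/2}`, then uniformly in `λ > 0` the rescaled function
`g^{(λ)}(w) = λ^{-1/2} g(λ^{1/2}w, λ)` is a weight function on `ℝ^{2n}` and
`m_{(λ)}(w) = m(λ^{1/2}w, λ)` is a weight for it. -/
theorem statement9 (n : ℕ)
    (g m : EuclideanSpace ℝ (Fin (2 * n)) × ℝ → ℝ)
    (hg : IsWeightFn g) (hm : IsWeight g m)
    (hglow : ∀ (w : EuclideanSpace ℝ (Fin (2 * n))) (lam : ℝ), 0 < lam →
      Real.sqrt lam ≤ g (Real.sqrt lam • w, lam)) :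
    ∃ C' M' : ℝ, 0 < C' ∧ 0 < M' ∧ ∀ lam : ℝ, 0 < lam →
      IsWeightFnWith C' M'
        (fun w : EuclideanSpace ℝ (Fin (2 * n)) =>
          (Real.sqrt lam)⁻¹ * g (Real.sqrt lam • w, lam)) ∧
      IsWeightWith C' M'
        (fun w : EuclideanSpace ℝ (Fin (2 * n)) =>
          (Real.sqrt lam)⁻¹ * g (Real.sqrt lam • w, lam))
        (fun w : EuclideanSpace ℝ (Fin (2 * n)) => m (Real.sqrt lam • w, lam)) := by

  obtain ⟨C, M, hC, hM, hgc, hg1, hgr⟩ := hg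
  obtain ⟨C2, M2, hC2, hM2, hm0, hmr⟩ := hm
  have aux : ∀ t : ℝ, 0 ≤ t → ∀ A B : ℝ, 0 < A → A ≤ max C C2 → B ≤ max M M2 →
      A * (1 + t) ^ B ≤ max C C2 * (1 + t) ^ max M M2 := by
    intro t ht A B hA hAle hBle
    exact mul_le_mul hAle (Real.rpow_le_rpow_of_exponent_le (by linarith) hBle)
      (Real.rpow_nonneg (by linarith) _) (by positivity)
  refine ⟨max C C2, max M M2, lt_of_lt_of_le hC (le_max_left _ _),
    lt_of_lt_of_le hM (le_max_left _ _), fun lam hlam => ?_⟩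
  set s := Real.sqrt lam with hs
  have hs0 : 0 < s := Real.sqrt_pos.mpr hlam
  have hgpos : ∀ x, 0 < g x := fun x => lt_of_lt_of_le one_pos (hg1 x)
  have glow : ∀ w, 1 ≤ s⁻¹ * g (s • w, lam) := by
    intro w
    rw [← inv_mul_cancel₀ (ne_of_gt hs0)]
    exact mul_le_mul_of_nonneg_left (hglow w lam hlam) (le_of_lt (inv_pos.mpr hs0))
  have key : ∀ w v : EuclideanSpace ℝ (Fin (2 * n)),
      ‖((s • w, lam) : EuclideanSpace ℝ (Fin (2 * n)) × ℝ) - (s • v, lam)‖ / g (s • w, lam)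
        = ‖w - v‖ / (s⁻¹ * g (s • w, lam)) := by
    intro w v
    have h1 : ((s • w, lam) : EuclideanSpace ℝ (Fin (2 * n)) × ℝ) - (s • v, lam)
        = (s • (w - v), 0) := by
      simp [Prod.ext_iff, smul_sub]
    rw [h1, Prod.norm_def]
    simp only [norm_zero, norm_smul, Real.norm_eq_abs, abs_of_pos hs0]
    rw [max_eq_left (mul_nonneg hs0.le (norm_nonneg _))]
    rw [div_eq_div_iff (ne_of_gt (hgpos _)) (ne_of_gt (mul_pos (inv_pos.mpr hs0) (hgpos _)))]
    field_simp
  have tnn : ∀ w v : EuclideanSpace ℝ (Fin (2 * n)),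
      0 ≤ ‖w - v‖ / (s⁻¹ * g (s • w, lam)) := by
    intro w v
    exact div_nonneg (norm_nonneg _) (le_of_lt (mul_pos (inv_pos.mpr hs0) (hgpos _)))
  refine ⟨⟨?_, glow, fun w v => ?_⟩, ⟨fun w => hm0 _, fun w v => ?_⟩⟩
  · exact continuous_const.mul (hgc.comp ((continuous_id.const_smul s).prodMk
      continuous_const))
  · obtain ⟨h1, h2⟩ := hgr (s • w, lam) (s • v, lam)
    rw [key w v] at h1 h2
    have e1 : s⁻¹ * g (s • w, lam) / (s⁻¹ * g (s • v, lam))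
        = g (s • w, lam) / g (s • v, lam) := by
      rw [mul_div_mul_left _ _ (ne_of_gt (inv_pos.mpr hs0))]
    have e2 : s⁻¹ * g (s • v, lam) / (s⁻¹ * g (s • w, lam))
        = g (s • v, lam) / g (s • w, lam) := by
      rw [mul_div_mul_left _ _ (ne_of_gt (inv_pos.mpr hs0))]
    constructor
    · exact le_trans (e1.le.trans h1) (aux _ (tnn w v) C M hC (le_max_left _ _) (le_max_left _ _))
    · exact le_trans (e2.le.trans h2) (aux _ (tnn w v) C M hC (le_max_left _ _) (le_max_left _ _))
  · obtain ⟨h1, h2⟩ := hmr (s • w, lam) (s • v, lam)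
    rw [key w v] at h1 h2
    exact ⟨le_trans h1 (aux _ (tnn w v) C2 M2 hC2 (le_max_right _ _) (le_max_right _ _)),
      le_trans h2 (aux _ (tnn w v) C2 M2 hC2 (le_max_right _ _) (le_max_right _ _))⟩
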